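/- The coefficients gₙ of the unique formal power series solution g = Σₙ gₙzⁿ in the free associative algebra on S₁, S₂, ... (graded with deg Sᵢ = i) of the equation g = Σ_{n≥0} Sₙ gⁿ (with S₀ = 1) satisfy gₙ = Σ_{π ∈ NDPFₙ} S^{t(π)}, where t(π) is the packed evaluation of π (the composition of n obtained by removing zeros from the multiplicity sequence of π). -/

import Mathlib

namespace NCL
open Finset

/-- nondecreasing parking functions (0-indexed) -/
def NDPF (n : ℕ) : Finset (Fin n → Fin n) :=
  Finset.univ.filter fun π => (∀ i j : Fin n, i ≤ j → π i ≤ π j) ∧ ∀ i : Fin n, (π i : ℕ) ≤ (i : ℕ)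

/-- concatenations of `k` shifted parking functions, total size `m` -/
def D (m k : ℕ) : Finset (Fin m → Fin (m + k)) :=
  Finset.univ.filter fun v => (∀ p q : Fin m, p ≤ q → v p ≤ v q) ∧ ∀ p : Fin m, (v p : ℕ) < (p : ℕ) + k

def cnt {n N : ℕ} (π : Fin n → Fin N) (x : ℕ) : ℕ :=
  (Finset.univ.filter fun p => (π p : ℕ) = x).card

def word (L : List ℕ) : FreeAlgebra ℚ ℕ :=
  ((L.filter fun e => e != 0).map (FreeAlgebra.ι ℚ)).prod

def wordN {n : ℕ} (π : Fin n → Fin n) : FreeAlgebra ℚ ℕ :=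
  word (List.ofFn fun x : Fin n => cnt π (x : ℕ))

def wordD {m k : ℕ} (v : Fin m → Fin (m + k)) : FreeAlgebra ℚ ℕ :=
  word (List.ofFn fun x : Fin (m + k - 1) => cnt v (x : ℕ))

def G (n : ℕ) : FreeAlgebra ℚ ℕ := ∑ π ∈ NDPF n, wordN π

def E (m k : ℕ) : FreeAlgebra ℚ ℕ := ∑ v ∈ D m k, wordD v

lemma cnt_congr {n N N' : ℕ} {f : Fin n → Fin N} {g : Fin n → Fin N'}
    (h : ∀ p, (f p : ℕ) = (g p : ℕ)) (x : ℕ) : cnt f x = cnt g x := by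
  unfold cnt
  congr 1
  exact Finset.filter_congr fun p _ => by rw [h p]

lemma word_cons_pos {a : ℕ} (ha : a ≠ 0) (L : List ℕ) :
    word (a :: L) = FreeAlgebra.ι ℚ a * word L := by
  unfold word
  rw [List.filter_cons, if_pos (by simpa using ha), List.map_cons, List.prod_cons]

lemma word_append (L M : List ℕ) : word (L ++ M) = word L * word M := by
  unfold word
  rw [List.filter_append, List.map_append, List.prod_append]

lemma word_zero_cons (L : List ℕ) : word (0 :: L) = word L := by
  unfold word
  rw [List.filter_cons]
  simp

/-- the length-`a` initial segment of `Fin m` has `a` elements -/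
lemma filter_lt_card {m : ℕ} (a : ℕ) (ha : a ≤ m) :
    ((Finset.univ : Finset (Fin m)).filter fun p : Fin m => (p : ℕ) < a).card = a := by
  rcases eq_or_lt_of_le ha with rfl | h
  · rw [Finset.filter_true_of_mem fun p _ => p.isLt, Finset.card_univ, Fintype.card_fin]
  · have he : ((Finset.univ : Finset (Fin m)).filter fun p : Fin m => (p : ℕ) < a)
        = Finset.Iio (⟨a, h⟩ : Fin m) := by
      ext p
      simp [Finset.mem_Iio, Fin.lt_def]
    rw [he, Fin.card_Iio]

/-- a down-closed subset of `Fin m` is an initial segment -/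
lemma mem_iff_lt_card {m : ℕ} (S : Finset (Fin m))
    (hS : ∀ p q : Fin m, q ≤ p → p ∈ S → q ∈ S) (p : Fin m) :
    p ∈ S ↔ (p : ℕ) < S.card := by
  constructor
  · intro hp
    have hsub : (Finset.univ.filter fun q : Fin m => (q : ℕ) < (p : ℕ) + 1) ⊆ S := by
      intro q hq
      simp only [Finset.mem_filter, Finset.mem_univ, true_and] at hq
      exact hS p q (by omega) hp
    have := Finset.card_le_card hsub
    rwa [filter_lt_card ((p : ℕ) + 1) p.isLt] at this
  · intro hp
    by_contra hmem
    have hsub : S ⊆ Finset.univ.filter fun q : Fin m => (q : ℕ) < (p : ℕ) := by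
      intro q hq
      simp only [Finset.mem_filter, Finset.mem_univ, true_and]
      by_contra hqp
      exact hmem (hS q p (by omega) hq)
    have := Finset.card_le_card hsub
    rw [filter_lt_card (p : ℕ) (le_of_lt p.isLt)] at this
    omega


lemma sub_one_lt_aux {m k x q : ℕ} (hx : x < m) (hq : q < m - k) : x - 1 < m - k + k := by omega

/-! ### membership lemmas -/

lemma mem_NDPF {n : ℕ} {π : Fin n → Fin n} :
    π ∈ NDPF n ↔ (∀ i j : Fin n, i ≤ j → π i ≤ π j) ∧ ∀ i : Fin n, (π i : ℕ) ≤ (i : ℕ) := by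
  simp [NDPF]

lemma mem_D {m k : ℕ} {v : Fin m → Fin (m + k)} :
    v ∈ D m k ↔ (∀ p q : Fin m, p ≤ q → v p ≤ v q) ∧ ∀ p : Fin m, (v p : ℕ) < (p : ℕ) + k := by
  simp [D]

/-! ### the zero-stripping bijection -/

def kstat {m : ℕ} (π : Fin m → Fin m) : ℕ := cnt π 0

lemma kstat_le {m : ℕ} (π : Fin m → Fin m) : kstat π ≤ m := by
  unfold kstat cnt
  exact (Finset.card_filter_le _ _).trans (by simp)

lemma kstat_spec {m : ℕ} {π : Fin m → Fin m} (hmono : ∀ i j : Fin m, i ≤ j → π i ≤ π j)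
    (p : Fin m) : (p : ℕ) < kstat π ↔ (π p : ℕ) = 0 := by
  have h := mem_iff_lt_card (Finset.univ.filter fun q : Fin m => (π q : ℕ) = 0)
    (fun p q hqp hp => by
      simp only [Finset.mem_filter, Finset.mem_univ, true_and] at hp ⊢
      have := hmono q p hqp
      rw [Fin.le_def] at this
      omega) p
  simp only [Finset.mem_filter, Finset.mem_univ, true_and] at h
  unfold kstat cnt
  exact h.symm

lemma kstat_pos {m : ℕ} {π : Fin m → Fin m} (hm : 1 ≤ m)
    (hpark : ∀ i : Fin m, (π i : ℕ) ≤ (i : ℕ))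
    (hmono : ∀ i j : Fin m, i ≤ j → π i ≤ π j) : 1 ≤ kstat π := by
  have h0 : (π ⟨0, hm⟩ : ℕ) = 0 := le_antisymm (hpark ⟨0, hm⟩) (Nat.zero_le _)
  have := (kstat_spec hmono ⟨0, hm⟩).mpr h0
  omega

def strip {m : ℕ} (k : ℕ) (π : Fin m → Fin m) (q : Fin (m - k)) : Fin (m - k + k) :=
  ⟨(π ⟨k + (q : ℕ), by have := q.isLt; omega⟩ : ℕ) - 1,
    sub_one_lt_aux (Fin.isLt _) q.isLt⟩

lemma strip_val {m k : ℕ} (π : Fin m → Fin m) (q : Fin (m - k)) (h : k + (q : ℕ) < m) :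
    (strip k π q : ℕ) = (π ⟨k + (q : ℕ), h⟩ : ℕ) - 1 := by
  simp [strip]

def glueZ {m : ℕ} (k : ℕ) (v : Fin (m - k) → Fin (m - k + k)) : Fin m → Fin m :=
  fun p => if h : (p : ℕ) < k then ⟨0, lt_of_le_of_lt (Nat.zero_le _) p.isLt⟩
    else ⟨min (1 + (v ⟨(p : ℕ) - k, by have := p.isLt; omega⟩ : ℕ)) (p : ℕ),
      lt_of_le_of_lt (min_le_right _ _) p.isLt⟩

lemma glueZ_lt {m k : ℕ} (v : Fin (m - k) → Fin (m - k + k)) {p : Fin m}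
    (h : (p : ℕ) < k) : (glueZ k v p : ℕ) = 0 := by
  unfold glueZ
  rw [dif_pos h]

lemma glueZ_ge {m k : ℕ} {v : Fin (m - k) → Fin (m - k + k)} (hv : v ∈ D (m - k) k)
    {x : ℕ} (hx : x < m) (hkx : k ≤ x) (hy : x - k < m - k) :
    (glueZ k v ⟨x, hx⟩ : ℕ) = 1 + (v ⟨x - k, hy⟩ : ℕ) := by
  have hb := (mem_D.1 hv).2 ⟨x - k, hy⟩
  simp only [Fin.val_mk] at hb
  simp only [glueZ, Fin.val_mk]
  rw [dif_neg (by omega)]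
  simp only [Fin.val_mk]
  omega

lemma glueZ_mem {m k : ℕ} {v : Fin (m - k) → Fin (m - k + k)} (hv : v ∈ D (m - k) k)
    (hk : 1 ≤ k) (hkm : k ≤ m) : glueZ k v ∈ NDPF m := by
  obtain ⟨hmono, hb⟩ := mem_D.1 hv
  rw [mem_NDPF]
  have key : ∀ (p : Fin m) (hp : k ≤ (p : ℕ)),
      (glueZ k v p : ℕ) = 1 + (v ⟨(p : ℕ) - k, by have := p.isLt; omega⟩ : ℕ) := by
    intro p hp
    have := glueZ_ge hv p.isLt hp (by have := p.isLt; omega)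
    rwa [show (⟨(p : ℕ), p.isLt⟩ : Fin m) = p from Fin.ext rfl] at this
  constructor
  · intro p q hpq
    rw [Fin.le_def] at hpq ⊢
    rcases lt_or_ge (p : ℕ) k with hp | hp
    · rw [glueZ_lt v hp]; omega
    · have hq : k ≤ (q : ℕ) := le_trans hp hpq
      rw [key p hp, key q hq]
      have := hmono ⟨(p : ℕ) - k, by have := p.isLt; omega⟩ ⟨(q : ℕ) - k, by have := q.isLt; omega⟩
        (by rw [Fin.mk_le_mk]; omega)
      rw [Fin.le_def] at this
      omega
  · intro p
    rcases lt_or_ge (p : ℕ) k with hp | hp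
    · rw [glueZ_lt v hp]; omega
    · rw [key p hp]
      have := hb ⟨(p : ℕ) - k, by have := p.isLt; omega⟩
      simp only [Fin.val_mk] at this
      omega

lemma cnt_glueZ_zero {m k : ℕ} {v : Fin (m - k) → Fin (m - k + k)} (hv : v ∈ D (m - k) k)
    (hkm : k ≤ m) : cnt (glueZ k v) 0 = k := by
  unfold cnt
  rw [Finset.filter_congr (q := fun p : Fin m => (p : ℕ) < k)
    (fun p _ => by
      constructor
      · intro hp
        rcases lt_or_ge (p : ℕ) k with h | h
        · exact h
        · exfalso
          have hpl := p.isLt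
          have := glueZ_ge hv p.isLt h (by omega)
          rw [show (⟨(p : ℕ), p.isLt⟩ : Fin m) = p from Fin.ext rfl] at this
          omega
      · intro hp
        exact glueZ_lt v hp)]
  exact filter_lt_card k hkm

lemma kstat_glueZ {m k : ℕ} {v : Fin (m - k) → Fin (m - k + k)} (hv : v ∈ D (m - k) k)
    (hkm : k ≤ m) : kstat (glueZ k v) = k := cnt_glueZ_zero hv hkm

lemma strip_glueZ {m k : ℕ} {v : Fin (m - k) → Fin (m - k + k)} (hv : v ∈ D (m - k) k)
    (hkm : k ≤ m) : strip k (glueZ k v) = v := by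
  funext q
  apply Fin.ext
  have hq := q.isLt
  rw [strip_val _ _ (by omega)]
  rw [glueZ_ge hv (by omega) (by omega) (by omega)]
  have : (v ⟨k + (q : ℕ) - k, by omega⟩ : ℕ) = (v q : ℕ) :=
    congrArg (fun t => ((v t : ℕ))) (Fin.ext (by simp))
  omega

lemma strip_mem {m : ℕ} {π : Fin m → Fin m} (hπ : π ∈ NDPF m) (hm : 1 ≤ m) :
    strip (kstat π) π ∈ D (m - kstat π) (kstat π) := by
  obtain ⟨hmono, hpark⟩ := mem_NDPF.1 hπ
  have hk1 : 1 ≤ kstat π := kstat_pos hm hpark hmono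
  rw [mem_D]
  constructor
  · intro p q hpq
    rw [Fin.le_def] at hpq ⊢
    have hp := p.isLt
    have hq := q.isLt
    rw [strip_val _ _ (by omega), strip_val _ _ (by omega)]
    have := hmono ⟨kstat π + (p : ℕ), by omega⟩ ⟨kstat π + (q : ℕ), by omega⟩
      (by rw [Fin.mk_le_mk]; omega)
    rw [Fin.le_def] at this
    omega
  · intro p
    have hp := p.isLt
    rw [strip_val _ _ (by omega)]
    have := hpark ⟨kstat π + (p : ℕ), by omega⟩
    simp only [Fin.val_mk] at this
    omega

lemma glueZ_strip {m : ℕ} {π : Fin m → Fin m} (hπ : π ∈ NDPF m) (hm : 1 ≤ m) :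
    glueZ (kstat π) (strip (kstat π) π) = π := by
  obtain ⟨hmono, hpark⟩ := mem_NDPF.1 hπ
  have hks := kstat_spec hmono
  funext p
  apply Fin.ext
  have hp := p.isLt
  rcases lt_or_ge (p : ℕ) (kstat π) with h | h
  · rw [glueZ_lt _ h, (hks p).1 h]
  · have hgz := glueZ_ge (strip_mem hπ hm) hp h (by omega)
    rw [show (⟨(p : ℕ), hp⟩ : Fin m) = p from Fin.ext rfl] at hgz
    rw [hgz, strip_val _ _ (by omega)]
    simp only [Fin.val_mk]
    have hpv : (π ⟨kstat π + ((p : ℕ) - kstat π), by omega⟩ : ℕ) = (π p : ℕ) :=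
      congrArg (fun t => ((π t : ℕ))) (Fin.ext (by simp; omega))
    have hpos : (π p : ℕ) ≠ 0 := fun hc => by have := (hks p).2 hc; omega
    omega


lemma cnt_glueZ_succ {m k : ℕ} {v : Fin (m - k) → Fin (m - k + k)} (hv : v ∈ D (m - k) k)
    (hkm : k ≤ m) {y : ℕ} (hy : y < m - 1) : cnt (glueZ k v) (y + 1) = cnt v y := by
  rcases eq_or_lt_of_le hkm with rfl | hkm'
  · -- k = m : both sides are 0
    unfold cnt
    rw [Finset.card_eq_zero.2, Finset.card_eq_zero.2]
    · apply Finset.eq_empty_of_forall_notMem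
      intro q _
      exact absurd q.isLt (by omega)
    · apply Finset.eq_empty_of_forall_notMem
      intro p hp
      simp only [Finset.mem_filter, Finset.mem_univ, true_and] at hp
      rw [glueZ_lt v p.isLt] at hp
      omega
  · unfold cnt
    apply Finset.card_nbij' (fun p : Fin m => (⟨(p : ℕ) - k, by have := p.isLt; omega⟩ : Fin (m - k)))
        (fun q : Fin (m - k) => (⟨k + (q : ℕ), by have := q.isLt; omega⟩ : Fin m))
    · intro p hp
      simp only [Finset.mem_coe, Finset.mem_filter, Finset.mem_univ, true_and] at hp ⊢
      have hpk : k ≤ (p : ℕ) := by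
        by_contra hc
        rw [glueZ_lt v (by omega)] at hp
        omega
      have := glueZ_ge hv p.isLt hpk (by have := p.isLt; omega)
      rw [show (⟨(p : ℕ), p.isLt⟩ : Fin m) = p from Fin.ext rfl] at this
      omega
    · intro q hq
      simp only [Finset.mem_coe, Finset.mem_filter, Finset.mem_univ, true_and] at hq ⊢
      have hq' := q.isLt
      have := glueZ_ge hv (x := k + (q : ℕ)) (by omega) (by omega) (by omega)
      have hvv : (v ⟨k + (q : ℕ) - k, by omega⟩ : ℕ) = (v q : ℕ) :=
        congrArg (fun t => ((v t : ℕ))) (Fin.ext (by simp))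
      omega
    · intro p hp
      simp only [Finset.mem_coe, Finset.mem_filter, Finset.mem_univ, true_and] at hp
      have hpk : k ≤ (p : ℕ) := by
        by_contra hc
        rw [glueZ_lt v (by omega)] at hp
        omega
      exact Fin.ext (by simp; omega)
    · intro q hq
      exact Fin.ext (by simp)

lemma wordN_glueZ {m k : ℕ} {v : Fin (m - k) → Fin (m - k + k)} (hv : v ∈ D (m - k) k)
    (hk : 1 ≤ k) (hkm : k ≤ m) :
    wordN (glueZ k v) = FreeAlgebra.ι ℚ k * wordD v := by
  unfold wordN wordD
  have hlist : (List.ofFn fun x : Fin m => cnt (glueZ k v) (x : ℕ))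
      = k :: (List.ofFn fun y : Fin ((m - k) + k - 1) => cnt v (y : ℕ)) := by
    apply List.ext_getElem
    · simp only [List.length_ofFn, List.length_cons]
      omega
    · intro n h1 h2
      simp only [List.length_ofFn] at h1
      rcases Nat.eq_zero_or_pos n with rfl | hn
      · rw [List.getElem_ofFn]
        simp only [List.getElem_cons_zero, Fin.val_mk]
        exact cnt_glueZ_zero hv hkm
      · obtain ⟨y, rfl⟩ : ∃ y, n = y + 1 := ⟨n - 1, by omega⟩
        rw [List.getElem_ofFn]
        rw [List.getElem_cons_succ, List.getElem_ofFn]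
        simp only [Fin.val_mk]
        exact cnt_glueZ_succ hv hkm (by omega)
  rw [hlist, word_cons_pos (by omega)]

lemma Grec {m : ℕ} (hm : 1 ≤ m) :
    G m = ∑ k ∈ Finset.Icc 1 m, FreeAlgebra.ι ℚ k * E (m - k) k := by
  have h1 : ∀ k ∈ Finset.Icc 1 m, FreeAlgebra.ι ℚ k * E (m - k) k
      = ∑ v ∈ D (m - k) k, FreeAlgebra.ι ℚ k * wordD v := fun k _ => by
    rw [E, Finset.mul_sum]
  rw [G, Finset.sum_congr rfl h1, Finset.sum_sigma' (Finset.Icc 1 m) (fun k => D (m - k) k)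
    (fun a b => FreeAlgebra.ι ℚ a * wordD b)]
  refine Eq.symm (Finset.sum_bij
    (fun (x : Σ k : ℕ, Fin (m - k) → Fin (m - k + k)) (_ : x ∈ (Finset.Icc 1 m).sigma fun k => D (m - k) k) => glueZ x.1 x.2) ?_ ?_ ?_ ?_)
  · intro x hx
    rw [Finset.mem_sigma] at hx
    obtain ⟨hx1, hx2⟩ := hx
    rw [Finset.mem_Icc] at hx1
    exact glueZ_mem hx2 hx1.1 hx1.2
  · rintro ⟨k₁, v₁⟩ h₁ ⟨k₂, v₂⟩ h₂ heq
    dsimp only at heq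
    rw [Finset.mem_sigma, Finset.mem_Icc] at h₁ h₂
    dsimp only at h₁ h₂
    have hk : k₁ = k₂ := by
      rw [← kstat_glueZ h₁.2 h₁.1.2, ← kstat_glueZ h₂.2 h₂.1.2, heq]
    subst hk
    refine Sigma.ext rfl (heq_of_eq ?_)
    dsimp only
    rw [← strip_glueZ h₁.2 h₁.1.2, ← strip_glueZ h₂.2 h₂.1.2, heq]
  · intro π hπ
    refine ⟨⟨kstat π, strip (kstat π) π⟩, ?_, glueZ_strip hπ hm⟩
    rw [Finset.mem_sigma, Finset.mem_Icc]
    obtain ⟨hmono, hpark⟩ := mem_NDPF.1 hπ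
    exact ⟨⟨kstat_pos hm hpark hmono, kstat_le π⟩, strip_mem hπ hm⟩
  · intro x hx
    rw [Finset.mem_sigma, Finset.mem_Icc] at hx
    exact (wordN_glueZ hx.2 hx.1.1 hx.1.2).symm


/-! ### the peeling bijection -/

def cut {m k : ℕ} (v : Fin m → Fin (m + k)) : ℕ :=
  (Finset.univ.filter fun p : Fin m => ∀ q : Fin m, q ≤ p → (v q : ℕ) ≤ (q : ℕ)).card

lemma cut_le {m k : ℕ} (v : Fin m → Fin (m + k)) : cut v ≤ m :=
  (Finset.card_filter_le _ _).trans (by simp)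

lemma cut_spec {m k : ℕ} (v : Fin m → Fin (m + k)) (p : Fin m) :
    (p : ℕ) < cut v ↔ ∀ q : Fin m, q ≤ p → (v q : ℕ) ≤ (q : ℕ) := by
  have h := mem_iff_lt_card (Finset.univ.filter fun p : Fin m => ∀ q : Fin m, q ≤ p → (v q : ℕ) ≤ (q : ℕ))
    (fun p' q' hqp hp => by
      simp only [Finset.mem_filter, Finset.mem_univ, true_and] at hp ⊢
      exact fun r hr => hp r (le_trans hr hqp)) p
  simp only [Finset.mem_filter, Finset.mem_univ, true_and] at h
  exact h.symm

lemma cut_lt_self {m k : ℕ} {v : Fin m → Fin (m + k)} {p : Fin m} (hp : (p : ℕ) < cut v) :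
    (v p : ℕ) ≤ (p : ℕ) := (cut_spec v p).1 hp p le_rfl

lemma v_cut_ge {m k : ℕ} {v : Fin m → Fin (m + k)}
    (hmono : ∀ p q : Fin m, p ≤ q → v p ≤ v q) {p : Fin m} (hp : cut v ≤ (p : ℕ)) :
    cut v + 1 ≤ (v p : ℕ) := by
  have hcm : cut v < m := lt_of_le_of_lt hp p.isLt
  have hnot : ¬ ((⟨cut v, hcm⟩ : Fin m) : ℕ) < cut v := by simp
  rw [cut_spec] at hnot
  push_neg at hnot
  obtain ⟨q, hq1, hq2⟩ := hnot
  rw [Fin.le_def] at hq1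
  simp only [Fin.val_mk] at hq1
  have hqc : (q : ℕ) = cut v := by
    rcases lt_or_eq_of_le hq1 with h | h
    · exact absurd (cut_lt_self h) (by omega)
    · exact h
  have := hmono q p (by rw [Fin.le_def]; omega)
  rw [Fin.le_def] at this
  omega

lemma glueD_aux {m k a x p : ℕ} (hx : x < m - a + k) (hp : a ≤ p) (hpm : p < m) :
    a + 1 + x < m + (k + 1) := by omega

def glueD {m k : ℕ} (a : ℕ) (u : Fin a → Fin a) (w : Fin (m - a) → Fin (m - a + k)) :
    Fin m → Fin (m + (k + 1)) :=
  fun p => if h : (p : ℕ) < a then ⟨min (u ⟨(p : ℕ), h⟩ : ℕ) (p : ℕ), by have := p.isLt; omega⟩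
    else ⟨a + 1 + (w ⟨(p : ℕ) - a, by have := p.isLt; omega⟩ : ℕ),
      glueD_aux (Fin.isLt _) (le_of_not_gt h) p.isLt⟩

lemma glueD_val_lt {m k a : ℕ} {u : Fin a → Fin a} {w : Fin (m - a) → Fin (m - a + k)}
    (hu : u ∈ NDPF a) {p : Fin m} (hpa : (p : ℕ) < a) :
    (glueD a u w p : ℕ) = (u ⟨(p : ℕ), hpa⟩ : ℕ) := by
  have hpark := (mem_NDPF.1 hu).2 ⟨(p : ℕ), hpa⟩
  simp only [Fin.val_mk] at hpark
  simp only [glueD]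
  rw [dif_pos hpa]
  simp only [Fin.val_mk]
  omega

lemma glueD_val_ge {m k a : ℕ} (u : Fin a → Fin a) (w : Fin (m - a) → Fin (m - a + k))
    {p : Fin m} (hpa : a ≤ (p : ℕ)) (hy : (p : ℕ) - a < m - a) :
    (glueD a u w p : ℕ) = a + 1 + (w ⟨(p : ℕ) - a, hy⟩ : ℕ) := by
  simp only [glueD]
  rw [dif_neg (not_lt.2 hpa)]

lemma glueD_mem {m k a : ℕ} {u : Fin a → Fin a} {w : Fin (m - a) → Fin (m - a + k)}
    (hu : u ∈ NDPF a) (hw : w ∈ D (m - a) k) (ha : a ≤ m) :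
    glueD a u w ∈ D m (k + 1) := by
  obtain ⟨humono, hupark⟩ := mem_NDPF.1 hu
  obtain ⟨hwmono, hwb⟩ := mem_D.1 hw
  rw [mem_D]
  constructor
  · intro p q hpq
    rw [Fin.le_def] at hpq ⊢
    have hpm := p.isLt
    have hqm := q.isLt
    rcases lt_or_ge (p : ℕ) a with hp | hp
    · rcases lt_or_ge (q : ℕ) a with hq | hq
      · rw [glueD_val_lt hu hp, glueD_val_lt hu hq]
        have := humono ⟨(p : ℕ), hp⟩ ⟨(q : ℕ), hq⟩ (by rw [Fin.mk_le_mk]; omega)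
        rw [Fin.le_def] at this
        omega
      · rw [glueD_val_lt hu hp, glueD_val_ge u w hq (by omega)]
        have := (u ⟨(p : ℕ), hp⟩).isLt
        omega
    · have hq : a ≤ (q : ℕ) := by omega
      rw [glueD_val_ge u w hp (by omega), glueD_val_ge u w hq (by omega)]
      have := hwmono ⟨(p : ℕ) - a, by omega⟩ ⟨(q : ℕ) - a, by omega⟩ (by rw [Fin.mk_le_mk]; omega)
      rw [Fin.le_def] at this
      omega
  · intro p
    have hpm := p.isLt
    rcases lt_or_ge (p : ℕ) a with hp | hp
    · rw [glueD_val_lt hu hp]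
      have := hupark ⟨(p : ℕ), hp⟩
      simp only [Fin.val_mk] at this
      omega
    · rw [glueD_val_ge u w hp (by omega)]
      have := hwb ⟨(p : ℕ) - a, by omega⟩
      simp only [Fin.val_mk] at this
      omega

lemma cut_glueD {m k a : ℕ} {u : Fin a → Fin a} {w : Fin (m - a) → Fin (m - a + k)}
    (hu : u ∈ NDPF a) (ha : a ≤ m) : cut (glueD a u w) = a := by
  unfold cut
  rw [Finset.filter_congr (q := fun p : Fin m => (p : ℕ) < a) (fun p _ => by
    constructor
    · intro h
      by_contra hc
      push_neg at hc
      have hpm := p.isLt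
      have h2 := h ⟨a, by omega⟩ (by rw [Fin.le_def]; simp; omega)
      rw [glueD_val_ge u w (by simp) (by simp; omega)] at h2
      simp only [Fin.val_mk] at h2
      omega
    · intro h q hq
      rw [Fin.le_def] at hq
      have hqa : (q : ℕ) < a := by omega
      rw [glueD_val_lt hu hqa]
      have := (mem_NDPF.1 hu).2 ⟨(q : ℕ), hqa⟩
      simp only [Fin.val_mk] at this
      omega)]
  exact filter_lt_card a ha

def ublockOf {m k : ℕ} (v : Fin m → Fin (m + k)) (i : Fin (cut v)) : Fin (cut v) :=
  ⟨min (v ⟨(i : ℕ), lt_of_lt_of_le i.isLt (cut_le v)⟩ : ℕ) (i : ℕ),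
    lt_of_le_of_lt (min_le_right _ _) i.isLt⟩

lemma vblock_aux {m k c x q : ℕ} (hx : x < m + (k + 1)) (hq : q < m - c) :
    x - (c + 1) < m - c + k := by omega

def vblockOf {m k : ℕ} (v : Fin m → Fin (m + (k + 1))) (q : Fin (m - cut v)) :
    Fin (m - cut v + k) :=
  ⟨(v ⟨cut v + (q : ℕ), by have := q.isLt; omega⟩ : ℕ) - (cut v + 1),
    vblock_aux (Fin.isLt _) q.isLt⟩

lemma ublockOf_mem {m k : ℕ} {v : Fin m → Fin (m + k)} (hv : v ∈ D m k) :
    ublockOf v ∈ NDPF (cut v) := by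
  obtain ⟨hmono, hb⟩ := mem_D.1 hv
  rw [mem_NDPF]
  constructor
  · intro i j hij
    rw [Fin.le_def] at hij ⊢
    simp only [ublockOf, Fin.val_mk]
    have := hmono ⟨(i : ℕ), lt_of_lt_of_le i.isLt (cut_le v)⟩
      ⟨(j : ℕ), lt_of_lt_of_le j.isLt (cut_le v)⟩ (by rw [Fin.mk_le_mk]; omega)
    rw [Fin.le_def] at this
    omega
  · intro i
    simp only [ublockOf, Fin.val_mk]
    omega

lemma vblockOf_mem {m k : ℕ} {v : Fin m → Fin (m + (k + 1))} (hv : v ∈ D m (k + 1)) :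
    vblockOf v ∈ D (m - cut v) k := by
  obtain ⟨hmono, hb⟩ := mem_D.1 hv
  rw [mem_D]
  constructor
  · intro p q hpq
    rw [Fin.le_def] at hpq ⊢
    simp only [vblockOf, Fin.val_mk]
    have := hmono ⟨cut v + (p : ℕ), by have := p.isLt; omega⟩
      ⟨cut v + (q : ℕ), by have := q.isLt; omega⟩ (by rw [Fin.mk_le_mk]; omega)
    rw [Fin.le_def] at this
    omega
  · intro q
    simp only [vblockOf, Fin.val_mk]
    have hq := q.isLt
    have := hb ⟨cut v + (q : ℕ), by omega⟩
    simp only [Fin.val_mk] at this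
    have hge := v_cut_ge hmono (p := ⟨cut v + (q : ℕ), by omega⟩) (by simp)
    omega

lemma glueD_blocks {m k : ℕ} {v : Fin m → Fin (m + (k + 1))} (hv : v ∈ D m (k + 1)) :
    glueD (cut v) (ublockOf v) (vblockOf v) = v := by
  obtain ⟨hmono, hb⟩ := mem_D.1 hv
  funext p
  apply Fin.ext
  have hpm := p.isLt
  rcases lt_or_ge (p : ℕ) (cut v) with hp | hp
  · rw [glueD_val_lt (ublockOf_mem hv) hp]
    simp only [ublockOf, Fin.val_mk]
    have h1 : (v ⟨(p : ℕ), lt_of_lt_of_le (by omega : (p:ℕ) < cut v) (cut_le v)⟩ : ℕ) = (v p : ℕ) :=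
      congrArg (fun t => ((v t : ℕ))) (Fin.ext rfl)
    have h2 := cut_lt_self hp
    omega
  · rw [glueD_val_ge _ _ hp (by omega)]
    simp only [vblockOf, Fin.val_mk]
    have h1 : (v ⟨cut v + ((p : ℕ) - cut v), by omega⟩ : ℕ) = (v p : ℕ) :=
      congrArg (fun t => ((v t : ℕ))) (Fin.ext (by simp; omega))
    have h2 := v_cut_ge hmono hp
    omega


section cntGlueD

variable {m k a : ℕ} {u : Fin a → Fin a} {w : Fin (m - a) → Fin (m - a + k)}

lemma glueD_mem_lt (hu : u ∈ NDPF a) {x : ℕ} (hxa : x < a) (ha : a ≤ m) :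
    ∀ p : Fin m, (glueD a u w p : ℕ) = x → (p : ℕ) < a := by
  intro p hp
  by_contra hc
  push_neg at hc
  have hpm := p.isLt
  rw [glueD_val_ge u w hc (by omega)] at hp
  omega

lemma cnt_glueD_lt (hu : u ∈ NDPF a) (ha : a ≤ m) {x : ℕ} (hxa : x < a) :
    cnt (glueD a u w) x = cnt u x := by
  have ha1 : 1 ≤ a := by omega
  unfold cnt
  apply Finset.card_nbij' (fun p : Fin m => (⟨min (p : ℕ) (a - 1), by omega⟩ : Fin a))
    (fun i : Fin a => (⟨(i : ℕ), lt_of_lt_of_le i.isLt ha⟩ : Fin m))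
  · intro p hp
    simp only [Finset.mem_coe, Finset.mem_filter, Finset.mem_univ, true_and] at hp ⊢
    have hpa := glueD_mem_lt hu hxa ha p hp
    rw [glueD_val_lt hu hpa] at hp
    have hc : (u ⟨min (p : ℕ) (a - 1), by omega⟩ : ℕ) = (u ⟨(p : ℕ), hpa⟩ : ℕ) :=
      congrArg (fun t => ((u t : ℕ))) (Fin.ext (by simp only [Fin.val_mk]; omega))
    omega
  · intro i hi
    simp only [Finset.mem_coe, Finset.mem_filter, Finset.mem_univ, true_and] at hi ⊢
    have h5 := glueD_val_lt (w := w) hu (p := (⟨(i : ℕ), lt_of_lt_of_le i.isLt ha⟩ : Fin m))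
      (by simpa using i.isLt)
    simp only [Fin.val_mk] at h5
    have h6 : (u ⟨(i : ℕ), by simpa using i.isLt⟩ : ℕ) = (u i : ℕ) :=
      congrArg (fun t => ((u t : ℕ))) (Fin.ext rfl)
    omega
  · intro p hp
    simp only [Finset.mem_coe, Finset.mem_filter, Finset.mem_univ, true_and] at hp
    have hpa := glueD_mem_lt hu hxa ha p hp
    exact Fin.ext (by simp only [Fin.val_mk]; omega)
  · intro i _
    have := i.isLt
    exact Fin.ext (by simp only [Fin.val_mk]; omega)

lemma cnt_glueD_eq (hu : u ∈ NDPF a) (ha : a ≤ m) : cnt (glueD a u w) a = 0 := by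
  unfold cnt
  rw [Finset.card_eq_zero]
  apply Finset.eq_empty_of_forall_notMem
  intro p hp
  simp only [Finset.mem_filter, Finset.mem_univ, true_and] at hp
  have hpm := p.isLt
  rcases lt_or_ge (p : ℕ) a with h | h
  · rw [glueD_val_lt hu h] at hp
    have := (u ⟨(p : ℕ), h⟩).isLt
    omega
  · rw [glueD_val_ge u w h (by omega)] at hp
    omega

lemma glueD_mem_gt (hu : u ∈ NDPF a) {y : ℕ} :
    ∀ p : Fin m, (glueD a u w p : ℕ) = a + 1 + y → a ≤ (p : ℕ) := by
  intro p hp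
  by_contra hc
  push_neg at hc
  rw [glueD_val_lt hu hc] at hp
  have := (u ⟨(p : ℕ), hc⟩).isLt
  omega

lemma cnt_glueD_gt (hu : u ∈ NDPF a) (ha : a ≤ m) {y : ℕ} :
    cnt (glueD a u w) (a + 1 + y) = cnt w y := by
  rcases eq_or_lt_of_le ha with rfl | ham
  · -- a = m : both sides are 0
    unfold cnt
    rw [Finset.card_eq_zero.2, Finset.card_eq_zero.2]
    · apply Finset.eq_empty_of_forall_notMem
      intro q _
      exact absurd q.isLt (by omega)
    · apply Finset.eq_empty_of_forall_notMem
      intro p hp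
      simp only [Finset.mem_filter, Finset.mem_univ, true_and] at hp
      have := glueD_mem_gt hu p hp
      have := p.isLt
      omega
  · unfold cnt
    apply Finset.card_nbij'
      (fun p : Fin m => (⟨min ((p : ℕ) - a) (m - a - 1), by omega⟩ : Fin (m - a)))
      (fun q : Fin (m - a) => (⟨a + (q : ℕ), by have := q.isLt; omega⟩ : Fin m))
    · intro p hp
      simp only [Finset.mem_coe, Finset.mem_filter, Finset.mem_univ, true_and] at hp ⊢
      have hpm := p.isLt
      have hpa := glueD_mem_gt hu p hp
      rw [glueD_val_ge u w hpa (by omega)] at hp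
      have hc : (w ⟨min ((p : ℕ) - a) (m - a - 1), by omega⟩ : ℕ)
          = (w ⟨(p : ℕ) - a, by omega⟩ : ℕ) :=
        congrArg (fun t => ((w t : ℕ))) (Fin.ext (by simp only [Fin.val_mk]; omega))
      omega
    · intro q hq
      simp only [Finset.mem_coe, Finset.mem_filter, Finset.mem_univ, true_and] at hq ⊢
      have hq' := q.isLt
      have hpos : a + (q : ℕ) < m := by omega
      have h5 := glueD_val_ge u w (p := (⟨a + (q : ℕ), hpos⟩ : Fin m))
        (by simp only [Fin.val_mk]; omega) (by simp only [Fin.val_mk]; omega)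
      simp only [Fin.val_mk] at h5
      have h6 : (w ⟨a + (q : ℕ) - a, by omega⟩ : ℕ) = (w q : ℕ) :=
        congrArg (fun t => ((w t : ℕ))) (Fin.ext (by simp only [Fin.val_mk]; omega))
      omega
    · intro p hp
      simp only [Finset.mem_coe, Finset.mem_filter, Finset.mem_univ, true_and] at hp
      have hpm := p.isLt
      have hpa := glueD_mem_gt hu p hp
      exact Fin.ext (by simp only [Fin.val_mk]; omega)
    · intro q _
      have := q.isLt
      exact Fin.ext (by simp only [Fin.val_mk]; omega)

lemma wordD_glueD (hu : u ∈ NDPF a) (hw : w ∈ D (m - a) k) (ha : a ≤ m) (hk : 1 ≤ k) :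
    wordD (glueD a u w) = wordN u * wordD w := by
  unfold wordD wordN
  have hlist : (List.ofFn fun x : Fin (m + (k + 1) - 1) => cnt (glueD a u w) (x : ℕ))
      = (List.ofFn fun x : Fin a => cnt u (x : ℕ))
        ++ 0 :: (List.ofFn fun y : Fin (m - a + k - 1) => cnt w (y : ℕ)) := by
    apply List.ext_getElem
    · simp only [List.length_ofFn, List.length_append, List.length_cons]
      omega
    · intro n h1 h2
      simp only [List.length_ofFn, List.length_append, List.length_cons] at h1 h2
      rw [List.getElem_ofFn]
      simp only [Fin.val_mk]
      rcases lt_trichotomy n a with hna | hna | hna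
      · rw [List.getElem_append_left (by simp only [List.length_ofFn]; omega)]
        rw [List.getElem_ofFn]
        simp only [Fin.val_mk]
        exact cnt_glueD_lt hu ha hna
      · subst hna
        rw [List.getElem_append_right (by simp only [List.length_ofFn]; omega)]
        simp only [List.length_ofFn, Nat.sub_self, List.getElem_cons_zero]
        exact cnt_glueD_eq hu ha
      · rw [List.getElem_append_right (by simp only [List.length_ofFn]; omega)]
        have hn' : n - (List.ofFn fun x : Fin a => cnt u (x : ℕ)).length = (n - a - 1) + 1 := by
          simp only [List.length_ofFn]
          omega
        simp only [hn', List.getElem_cons_succ, List.getElem_ofFn, Fin.val_mk]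
        rw [← cnt_glueD_gt hu ha (y := n - a - 1)]
        congr 1
        omega
  rw [hlist, word_append, word_zero_cons]

end cntGlueD

lemma Estep {m k : ℕ} (hk : 1 ≤ k) :
    E m (k + 1) = ∑ a ∈ Finset.range (m + 1), G a * E (m - a) k := by
  have h1 : ∀ a ∈ Finset.range (m + 1), G a * E (m - a) k
      = ∑ x ∈ NDPF a ×ˢ D (m - a) k, wordN x.1 * wordD x.2 := fun a _ => by
    rw [G, E, Finset.sum_mul_sum]
    rw [Finset.sum_product' (NDPF a) (D (m - a) k) (fun x y => wordN x * wordD y)]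
  rw [E, Finset.sum_congr rfl h1,
    Finset.sum_sigma' (Finset.range (m + 1)) (fun a => NDPF a ×ˢ D (m - a) k)
      (fun a x => wordN x.1 * wordD x.2)]
  refine Eq.symm (Finset.sum_bij
    (fun (x : Σ a : ℕ, (Fin a → Fin a) × (Fin (m - a) → Fin (m - a + k)))
      (_ : x ∈ (Finset.range (m + 1)).sigma fun a => NDPF a ×ˢ D (m - a) k) =>
        glueD x.1 x.2.1 x.2.2) ?_ ?_ ?_ ?_)
  · intro x hx
    rw [Finset.mem_sigma, Finset.mem_range, Finset.mem_product] at hx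
    exact glueD_mem hx.2.1 hx.2.2 (by omega)
  · rintro ⟨a₁, u₁, w₁⟩ h₁ ⟨a₂, u₂, w₂⟩ h₂ heq
    dsimp only at heq
    rw [Finset.mem_sigma, Finset.mem_range, Finset.mem_product] at h₁ h₂
    dsimp only at h₁ h₂
    have haa : a₁ = a₂ := by
      rw [← cut_glueD (u := u₁) (w := w₁) h₁.2.1 (by omega),
        ← cut_glueD (u := u₂) (w := w₂) h₂.2.1 (by omega), heq]
    subst haa
    have hu : u₁ = u₂ := by
      funext i
      have hia : (i : ℕ) < a₁ := i.isLt
      have him : (i : ℕ) < m := by omega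
      have h4 : ((glueD a₁ u₁ w₁ ⟨(i : ℕ), him⟩ : Fin (m + (k + 1))) : ℕ)
          = ((glueD a₁ u₂ w₂ ⟨(i : ℕ), him⟩ : Fin (m + (k + 1))) : ℕ) := by rw [heq]
      rw [glueD_val_lt h₁.2.1 (by simpa using hia), glueD_val_lt h₂.2.1 (by simpa using hia)] at h4
      apply Fin.ext
      have e1 : (u₁ ⟨((⟨(i : ℕ), him⟩ : Fin m) : ℕ), by simpa using hia⟩ : ℕ) = (u₁ i : ℕ) :=
        congrArg (fun t => ((u₁ t : ℕ))) (Fin.ext rfl)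
      have e2 : (u₂ ⟨((⟨(i : ℕ), him⟩ : Fin m) : ℕ), by simpa using hia⟩ : ℕ) = (u₂ i : ℕ) :=
        congrArg (fun t => ((u₂ t : ℕ))) (Fin.ext rfl)
      omega
    subst hu
    have hw : w₁ = w₂ := by
      funext q
      have hq' := q.isLt
      have hqm : a₁ + (q : ℕ) < m := by omega
      have h4 : ((glueD a₁ u₁ w₁ ⟨a₁ + (q : ℕ), hqm⟩ : Fin (m + (k + 1))) : ℕ)
          = ((glueD a₁ u₁ w₂ ⟨a₁ + (q : ℕ), hqm⟩ : Fin (m + (k + 1))) : ℕ) := by rw [heq]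
      rw [glueD_val_ge u₁ w₁ (by simp only [Fin.val_mk]; omega) (by simp only [Fin.val_mk]; omega),
        glueD_val_ge u₁ w₂ (by simp only [Fin.val_mk]; omega) (by simp only [Fin.val_mk]; omega)]
        at h4
      apply Fin.ext
      have e1 : (w₁ ⟨((⟨a₁ + (q : ℕ), hqm⟩ : Fin m) : ℕ) - a₁, by simp only [Fin.val_mk]; omega⟩ : ℕ)
          = (w₁ q : ℕ) :=
        congrArg (fun t => ((w₁ t : ℕ))) (Fin.ext (by simp only [Fin.val_mk]; omega))
      have e2 : (w₂ ⟨((⟨a₁ + (q : ℕ), hqm⟩ : Fin m) : ℕ) - a₁, by simp only [Fin.val_mk]; omega⟩ : ℕ)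
          = (w₂ q : ℕ) :=
        congrArg (fun t => ((w₂ t : ℕ))) (Fin.ext (by simp only [Fin.val_mk]; omega))
      omega
    subst hw
    rfl
  · intro v hv
    refine ⟨⟨cut v, (ublockOf v, vblockOf v)⟩, ?_, glueD_blocks hv⟩
    rw [Finset.mem_sigma, Finset.mem_range, Finset.mem_product]
    refine ⟨?_, ublockOf_mem hv, vblockOf_mem hv⟩
    dsimp only
    have := cut_le v
    omega
  · intro x hx
    rw [Finset.mem_sigma, Finset.mem_range, Finset.mem_product] at hx
    exact (wordD_glueD hx.2.1 hx.2.2 (by omega) hk).symm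


/-! ### base cases and assembly -/

lemma univ_fin0 {α : Fin 0 → Type*} [∀ i, Fintype (α i)] [DecidableEq ((i : Fin 0) → α i)] :
    (Finset.univ : Finset ((i : Fin 0) → α i)) = {fun i => i.elim0} := by
  ext f
  simp only [Finset.mem_univ, Finset.mem_singleton, true_iff]
  funext i
  exact i.elim0

lemma word_nil : word [] = 1 := rfl

lemma G_zero : G 0 = 1 := by
  rw [G, show NDPF 0 = (Finset.univ : Finset (Fin 0 → Fin 0)) from
    Finset.filter_true_of_mem (fun π _ => ⟨fun i => i.elim0, fun i => i.elim0⟩)]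
  rw [show (Finset.univ : Finset (Fin 0 → Fin 0)) = {fun i => i.elim0} from by
    ext f
    simp only [Finset.mem_univ, Finset.mem_singleton, true_iff]
    funext i
    exact i.elim0]
  rw [Finset.sum_singleton]
  show word (List.ofFn _) = 1
  rw [List.ofFn_zero]
  rfl

lemma E_zero (m : ℕ) : E m 0 = if m = 0 then 1 else 0 := by
  rcases Nat.eq_zero_or_pos m with rfl | hm
  · rw [E, if_pos rfl]
    rw [show D 0 0 = (Finset.univ : Finset (Fin 0 → Fin 0)) from
      Finset.filter_true_of_mem (fun v _ => ⟨fun p => p.elim0, fun p => p.elim0⟩)]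
    rw [show (Finset.univ : Finset (Fin 0 → Fin 0)) = {fun i => i.elim0} from by
      ext f
      simp only [Finset.mem_univ, Finset.mem_singleton, true_iff]
      funext i
      exact i.elim0]
    rw [Finset.sum_singleton]
    show word (List.ofFn _) = 1
    rw [show (0 + 0 - 1 : ℕ) = 0 from rfl, List.ofFn_zero]
    rfl
  · rw [E, if_neg (by omega)]
    rw [show D m 0 = ∅ from Finset.eq_empty_of_forall_notMem (fun v hv => by
      obtain ⟨-, hb⟩ := mem_D.1 hv
      have := hb ⟨0, hm⟩
      simp only [Fin.val_mk] at this
      omega)]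
    exact Finset.sum_empty

lemma E_one (m : ℕ) : E m 1 = G m := by
  rw [E, G]
  refine Finset.sum_nbij'
    (fun v : Fin m → Fin (m + 1) => fun p : Fin m =>
      (⟨min (v p : ℕ) (p : ℕ), lt_of_le_of_lt (min_le_right _ _) p.isLt⟩ : Fin m))
    (fun π : Fin m → Fin m => fun p : Fin m =>
      (⟨(π p : ℕ), lt_of_lt_of_le (π p).isLt (by omega)⟩ : Fin (m + 1)))
    ?_ ?_ ?_ ?_ ?_
  · intro v hv
    obtain ⟨hmono, hb⟩ := mem_D.1 hv
    rw [mem_NDPF]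
    constructor
    · intro p q hpq
      rw [Fin.le_def] at hpq ⊢
      simp only [Fin.val_mk]
      have := hmono p q hpq
      rw [Fin.le_def] at this
      omega
    · intro p
      simp only [Fin.val_mk]
      omega
  · intro π hπ
    obtain ⟨hmono, hpark⟩ := mem_NDPF.1 hπ
    rw [mem_D]
    constructor
    · intro p q hpq
      rw [Fin.le_def] at hpq ⊢
      simp only [Fin.val_mk]
      have := hmono p q hpq
      rw [Fin.le_def] at this
      omega
    · intro p
      simp only [Fin.val_mk]
      have := hpark p
      omega
  · intro v hv
    obtain ⟨-, hb⟩ := mem_D.1 hv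
    funext p
    apply Fin.ext
    simp only [Fin.val_mk]
    have := hb p
    omega
  · intro π hπ
    obtain ⟨-, hpark⟩ := mem_NDPF.1 hπ
    funext p
    apply Fin.ext
    simp only [Fin.val_mk]
    have := hpark p
    omega
  · intro v hv
    obtain ⟨-, hb⟩ := mem_D.1 hv
    show word _ = word _
    apply congrArg word
    show List.ofFn (fun x : Fin m => cnt v (x : ℕ)) = _
    apply congrArg List.ofFn
    funext x
    apply cnt_congr
    intro p
    simp only [Fin.val_mk]
    have := hb p
    omega

lemma adT_one (n : ℕ) : Finset.Nat.antidiagonalTuple 1 n = {fun _ : Fin 1 => n} := by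
  ext c
  rw [Finset.Nat.mem_antidiagonalTuple, Finset.mem_singleton, Fin.sum_univ_one]
  constructor
  · intro h
    funext i
    rw [Fin.eq_zero i, h]
  · intro h
    rw [h]

lemma sum_adT_succ {M : Type*} [AddCommMonoid M] (k n : ℕ) (g : (Fin (k + 1) → ℕ) → M) :
    ∑ c ∈ Finset.Nat.antidiagonalTuple (k + 1) n, g c
      = ∑ a ∈ Finset.range (n + 1), ∑ c' ∈ Finset.Nat.antidiagonalTuple k (n - a),
          g (Fin.cons a c') := by
  rw [Finset.sum_sigma' (Finset.range (n + 1)) (fun a => Finset.Nat.antidiagonalTuple k (n - a))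
    (fun a c' => g (Fin.cons a c'))]
  refine Eq.symm (Finset.sum_bij
    (fun (x : Σ _ : ℕ, Fin k → ℕ)
      (_ : x ∈ (Finset.range (n + 1)).sigma fun a => Finset.Nat.antidiagonalTuple k (n - a)) =>
        Fin.cons x.1 x.2) ?_ ?_ ?_ ?_)
  · intro x hx
    rw [Finset.mem_sigma, Finset.mem_range, Finset.Nat.mem_antidiagonalTuple] at hx
    rw [Finset.Nat.mem_antidiagonalTuple, Fin.sum_univ_succ]
    simp only [Fin.cons_zero, Fin.cons_succ]
    omega
  · rintro ⟨a₁, c₁⟩ h₁ ⟨a₂, c₂⟩ h₂ heq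
    dsimp only at heq
    have ha : a₁ = a₂ := by
      have := congrFun heq 0
      simpa using this
    subst ha
    refine Sigma.ext rfl (heq_of_eq ?_)
    dsimp only
    funext i
    have := congrFun heq i.succ
    simpa using this
  · intro c hc
    rw [Finset.Nat.mem_antidiagonalTuple] at hc
    refine ⟨⟨c 0, Fin.tail c⟩, ?_, Fin.cons_self_tail c⟩
    rw [Finset.mem_sigma, Finset.mem_range, Finset.Nat.mem_antidiagonalTuple]
    dsimp only
    rw [Fin.sum_univ_succ] at hc
    constructor
    · omega
    · show ∑ i : Fin k, c i.succ = n - c 0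
      omega
  · intro x _
    rfl

lemma Eform : ∀ k m : ℕ, E m k
    = ∑ c ∈ Finset.Nat.antidiagonalTuple k m, (List.ofFn fun j => G (c j)).prod := by
  intro k
  induction k with
  | zero =>
    intro m
    rcases Nat.eq_zero_or_pos m with rfl | hm
    · rw [E_zero, if_pos rfl, Nat.antidiagonalTuple_zero_right, Finset.sum_singleton,
        List.ofFn_zero, List.prod_nil]
    · rw [E_zero, if_neg (by omega)]
      rw [show Finset.Nat.antidiagonalTuple 0 m = ∅ from Finset.eq_empty_of_forall_notMem
        (fun c hc => by
          rw [Finset.Nat.mem_antidiagonalTuple] at hc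
          simp at hc
          omega)]
      exact Finset.sum_empty.symm
  | succ k ih =>
    intro m
    rcases Nat.eq_zero_or_pos k with rfl | hk
    · rw [E_one, adT_one, Finset.sum_singleton]
      rw [List.ofFn_succ, List.ofFn_zero, List.prod_cons, List.prod_nil, mul_one]
    · rw [Estep hk, sum_adT_succ k m (fun c => (List.ofFn fun j => G (c j)).prod)]
      apply Finset.sum_congr rfl
      intro a _
      rw [ih (m - a), Finset.mul_sum]
      apply Finset.sum_congr rfl
      intro c' _
      rw [List.ofFn_succ, List.prod_cons]
      simp only [Fin.cons_zero, Fin.cons_succ]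


end NCL

/-- Noncommutative Lagrange inversion: if `F n` is the degree-`n` component of
the unique solution of `g = ∑_{n≥0} Sₙ gⁿ` (with `S₀ = 1`) in the free
associative algebra on `S₁, S₂, …` (degreewise recursion `F 0 = 1`,
`F n = ∑_{k=1}^n S_k ∑_{n₁+⋯+n_k = n-k} F n₁ ⋯ F n_k`), then
`F n = ∑_{π ∈ NDPFₙ} S^{t(π)}` where `t(π)` is the packed evaluation of `π`
(the nonzero letter multiplicities of `π`, in order). -/
theorem noncommutative_lagrange (F : ℕ → FreeAlgebra ℚ ℕ)
    (h0 : F 0 = 1)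
    (hrec : ∀ n, 1 ≤ n → F n =
      ∑ k ∈ Finset.Icc 1 n, ∑ c ∈ Finset.Nat.antidiagonalTuple k (n - k),
        FreeAlgebra.ι ℚ k * (List.ofFn fun i : Fin k => F (c i)).prod)
    (n : ℕ) :
    F n = ∑ π ∈ Finset.univ.filter
        (fun π : Fin n → Fin n =>
          (∀ i j : Fin n, i ≤ j → π i ≤ π j) ∧ ∀ i : Fin n, (π i : ℕ) ≤ (i : ℕ)),
      ((((List.ofFn fun i : Fin n =>
            (Finset.univ.filter (fun j => π j = i)).card).filter
          (fun e => e != 0)).map (FreeAlgebra.ι ℚ)).prod) := by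
  have hFG : ∀ n, F n = NCL.G n := by
    intro n
    induction n using Nat.strong_induction_on with
    | _ n ih =>
      rcases Nat.eq_zero_or_pos n with rfl | hn
      · rw [h0, NCL.G_zero]
      · rw [hrec n hn, NCL.Grec hn]
        apply Finset.sum_congr rfl
        intro k hk
        rw [Finset.mem_Icc] at hk
        rw [NCL.Eform k (n - k), Finset.mul_sum]
        apply Finset.sum_congr rfl
        intro c hc
        rw [Finset.Nat.mem_antidiagonalTuple] at hc
        have hlt : ∀ i : Fin k, c i < n := by
          intro i
          have h1 : c i ≤ ∑ j : Fin k, c j :=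
            Finset.single_le_sum (fun j _ => Nat.zero_le _) (Finset.mem_univ i)
          omega
        have he : (fun i : Fin k => F (c i)) = fun i : Fin k => NCL.G (c i) :=
          funext fun i => ih (c i) (hlt i)
        rw [he]
  rw [hFG n, NCL.G]
  apply Finset.sum_congr rfl
  intro π _
  have hl : (List.ofFn fun x : Fin n => NCL.cnt π (x : ℕ))
      = List.ofFn fun i : Fin n => (Finset.univ.filter (fun j => π j = i)).card := by
    apply congrArg List.ofFn
    funext x
    unfold NCL.cnt
    congr 1
    apply Finset.filter_congr
    intro j _
    exact Fin.val_inj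
  unfold NCL.wordN NCL.word
  rw [hl]
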